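/- Let α > 0, H ∈ (1/2, 1), r_H as defined, and for T > 0 define l_T(u, v) = (1/(2ατ T)) e^{−2αT} e^{αu} e^{αv} 1_{[0,T]²}(u,v), where τ > 0 is a fixed constant. Then ∫_{[0,T]²}∫_{[0,T]²} l_T(u₁,u₂) l_T(v₁,v₂) r_H(u₁,v₁) r_H(u₂,v₂) du dv ≤ C/T² for some constant C depending only on α, H, τ and all T ≥ 1. -/
import Mathlib

open MeasureTheory Real

/-- The kernel r_H. -/
noncomputable def rker (H w z : ℝ) : ℝ :=
  H ^ (2 * H - 1) * (2 * H - 1) * (Real.exp (w / H) * Real.exp (z / H)) ^ (1 - H) *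
    |Real.exp (w / H) - Real.exp (z / H)| ^ (2 * H - 2)

/-- The kernel l_T (with indicator of [0,T]²). -/
noncomputable def lker (α τ T u v : ℝ) : ℝ :=
  Set.indicator (Set.Icc (0:ℝ) T ×ˢ Set.Icc (0:ℝ) T)
    (fun p : ℝ × ℝ => (1 / (2 * α * τ * T)) * Real.exp (-2 * α * T) *
      Real.exp (α * p.1) * Real.exp (α * p.2)) (u, v)

section Aux

variable {H : ℝ} (hH : H ∈ Set.Ioo (1/2 : ℝ) 1)
include hH

lemma c_nonneg : (0:ℝ) ≤ H ^ (2*H-1) * (2*H-1) := by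
  obtain ⟨h1, h2⟩ := id hH
  have := (rpow_pos_of_pos (show (0:ℝ) < H by linarith) (2*H-1)).le
  nlinarith

lemma rker_nonneg (w z : ℝ) : 0 ≤ rker H w z := by
  have hc := c_nonneg hH
  unfold rker
  have h1 : (0:ℝ) ≤ (Real.exp (w / H) * Real.exp (z / H)) ^ (1 - H) :=
    Real.rpow_nonneg (by positivity) _
  have h2 : (0:ℝ) ≤ |Real.exp (w / H) - Real.exp (z / H)| ^ (2 * H - 2) :=
    Real.rpow_nonneg (abs_nonneg _) _
  have : H ^ (2 * H - 1) * (2 * H - 1) = H ^ (2*H-1) * (2*H-1) := by norm_num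
  positivity

omit hH in
lemma rker_symm' (w z : ℝ) : rker H w z = rker H z w := by
  unfold rker
  rw [mul_comm (Real.exp (w / H)) (Real.exp (z / H)), abs_sub_comm]

lemma rker_eq {w z : ℝ} (hzw : z ≤ w) :
    rker H w z = (H ^ (2*H-1) * (2*H-1)) * Real.exp (-((w-z)/H)) ^ (1-H) *
      (1 - Real.exp (-((w-z)/H))) ^ (2*H-2) := by
  obtain ⟨h1, h2⟩ := id hH
  have hH0 : (0:ℝ) < H := by linarith
  set a := Real.exp (w / H) with ha
  set b := Real.exp (z / H) with hb
  set t := Real.exp (-((w-z)/H)) with ht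
  have hba : b = a * t := by rw [ha, hb, ht, ← Real.exp_add]; ring_nf
  have ht1 : t ≤ 1 := by
    rw [ht]; apply Real.exp_le_one_iff.mpr; rw [neg_nonpos]
    exact div_nonneg (by linarith) hH0.le
  have ht0 : (0:ℝ) < t := Real.exp_pos _
  have ha0 : (0:ℝ) < a := Real.exp_pos _
  have hab : |a - b| = a * (1 - t) := by
    rw [hba, abs_of_nonneg]
    · ring
    · nlinarith
  unfold rker
  rw [← ha, ← hb, hab, hba]
  rw [show a * (a * t) = (a * a) * t by ring]
  rw [Real.mul_rpow (by positivity) ht0.le,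
    Real.mul_rpow ha0.le ha0.le,
    Real.mul_rpow ha0.le (by linarith)]
  have haa : a ^ (1-H) * a ^ (1-H) * a ^ (2*H-2) = 1 := by
    rw [← Real.rpow_add ha0, ← Real.rpow_add ha0,
      show (1-H) + (1-H) + (2*H-2) = 0 by ring, Real.rpow_zero]
  calc H ^ (2*H-1) * (2*H-1) * (a ^ (1-H) * a ^ (1-H) * t ^ (1-H)) *
        (a ^ (2*H-2) * (1-t) ^ (2*H-2))
      = (H ^ (2*H-1) * (2*H-1)) * t ^ (1-H) * (1-t) ^ (2*H-2) *
        (a ^ (1-H) * a ^ (1-H) * a ^ (2*H-2)) := by ring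
    _ = (H ^ (2*H-1) * (2*H-1)) * t ^ (1-H) * (1-t) ^ (2*H-2) := by rw [haa, mul_one]

lemma rker_le {w z : ℝ} (hzw : z ≤ w) :
    rker H w z ≤ (H ^ (2*H-1) * (2*H-1)) * (1 - Real.exp (-((w-z)/H))) ^ (2*H-2) := by
  obtain ⟨h1, h2⟩ := id hH
  have hH0 : (0:ℝ) < H := by linarith
  rw [rker_eq hH hzw]
  have hc := c_nonneg hH
  have hexp1 : Real.exp (-((w-z)/H)) ≤ 1 := Real.exp_le_one_iff.mpr
    (by rw [neg_nonpos]; exact div_nonneg (by linarith) hH0.le)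
  have ht1 : Real.exp (-((w-z)/H)) ^ (1-H) ≤ 1 :=
    Real.rpow_le_one (Real.exp_pos _).le hexp1 (by linarith)
  have hX : (0:ℝ) ≤ (1 - Real.exp (-((w-z)/H))) ^ (2*H-2) :=
    Real.rpow_nonneg (by linarith) _
  calc H ^ (2*H-1) * (2*H-1) * Real.exp (-((w-z)/H)) ^ (1-H) *
        (1 - Real.exp (-((w-z)/H))) ^ (2*H-2)
      ≤ H ^ (2*H-1) * (2*H-1) * 1 * (1 - Real.exp (-((w-z)/H))) ^ (2*H-2) := by
        exact mul_le_mul_of_nonneg_right (mul_le_mul_of_nonneg_left ht1 hc) hX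
    _ = (H ^ (2*H-1) * (2*H-1)) * (1 - Real.exp (-((w-z)/H))) ^ (2*H-2) := by ring

lemma rker_far {w z : ℝ} (hzw : z ≤ w) (hfar : 1 ≤ w - z) :
    rker H w z ≤ (H ^ (2*H-1) * (2*H-1)) * (1 - Real.exp (-(1/H))) ^ (2*H-2) := by
  obtain ⟨h1, h2⟩ := id hH
  have hH0 : (0:ℝ) < H := by linarith
  refine (rker_le hH hzw).trans ?_
  apply mul_le_mul_of_nonneg_left _ (c_nonneg hH)
  apply Real.rpow_le_rpow_of_nonpos
  · have : Real.exp (-(1/H)) < 1 := Real.exp_lt_one_iff.mpr (neg_lt_zero.mpr (by positivity))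
    linarith
  · have : Real.exp (-((w-z)/H)) ≤ Real.exp (-(1/H)) := by
      apply Real.exp_le_exp.mpr
      rw [neg_le_neg_iff]
      gcongr
    linarith
  · linarith

lemma rker_near {w z : ℝ} (hzw : z ≤ w) (hnear : w - z ≤ 1) :
    rker H w z ≤ (H ^ (2*H-1) * (2*H-1)) * Real.exp 2 * H ^ (2-2*H) * (w-z) ^ (2*H-2) := by
  obtain ⟨h1, h2⟩ := id hH
  have hH0 : (0:ℝ) < H := by linarith
  have hc := c_nonneg hH
  rcases eq_or_lt_of_le hzw with heq | hlt
  · have hwz : w = z := heq.symm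
    subst hwz
    have : rker H w w = 0 := by
      unfold rker
      rw [sub_self, abs_zero, Real.zero_rpow (by intro h; nlinarith), mul_zero]
    rw [this, sub_self, Real.zero_rpow (by intro h; nlinarith), mul_zero]
  · have hs0 : 0 < w - z := by linarith
    refine (rker_le hH hzw).trans ?_
    set y := (w - z) / H with hy
    have hy0 : 0 < y := by positivity
    have hy2 : y < 2 := by
      rw [hy, div_lt_iff₀ hH0]; nlinarith
    -- 1 - exp (-y) ≥ y * exp (-2)
    have key : y * Real.exp (-2 : ℝ) ≤ 1 - Real.exp (-y) := by
      have h1' : y * Real.exp (-y) ≤ 1 - Real.exp (-y) := by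
        have h := Real.add_one_le_exp y
        have hey : (0:ℝ) < Real.exp y := Real.exp_pos y
        rw [Real.exp_neg, ← sub_nonneg]
        have heq2 : 1 - (Real.exp y)⁻¹ - y * (Real.exp y)⁻¹
            = (Real.exp y - 1 - y) * (Real.exp y)⁻¹ := by field_simp
        rw [heq2]
        exact mul_nonneg (by linarith) (inv_nonneg.mpr hey.le)
      have h2' : Real.exp (-2:ℝ) ≤ Real.exp (-y) := Real.exp_le_exp.mpr (by linarith)
      nlinarith [Real.exp_pos (-2:ℝ)]
    have hbase : (0:ℝ) < y * Real.exp (-2:ℝ) := by positivity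
    have step1 : (1 - Real.exp (-y)) ^ (2*H-2) ≤ (y * Real.exp (-2:ℝ)) ^ (2*H-2) :=
      Real.rpow_le_rpow_of_nonpos hbase key (by linarith)
    have step2 : (y * Real.exp (-2:ℝ)) ^ (2*H-2)
        = y ^ (2*H-2) * Real.exp (-2:ℝ) ^ (2*H-2) :=
      Real.mul_rpow hy0.le (Real.exp_pos _).le
    have step3 : Real.exp (-2:ℝ) ^ (2*H-2) ≤ Real.exp 2 := by
      rw [← Real.exp_mul]
      exact Real.exp_le_exp.mpr (by nlinarith)
    have step4 : y ^ (2*H-2) = (w-z) ^ (2*H-2) * H ^ (2-2*H) := by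
      rw [hy, Real.div_rpow hs0.le hH0.le, div_eq_mul_inv, ← Real.rpow_neg hH0.le]
      norm_num
    have hynn : (0:ℝ) ≤ y ^ (2*H-2) := Real.rpow_nonneg hy0.le _
    have hsnn : (0:ℝ) ≤ (w-z) ^ (2*H-2) := Real.rpow_nonneg hs0.le _
    have hHnn : (0:ℝ) ≤ H ^ (2-2*H) := Real.rpow_nonneg hH0.le _
    calc (H ^ (2*H-1) * (2*H-1)) * (1 - Real.exp (-((w-z)/H))) ^ (2*H-2)
        = (H ^ (2*H-1) * (2*H-1)) * (1 - Real.exp (-y)) ^ (2*H-2) := by rw [hy]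
      _ ≤ (H ^ (2*H-1) * (2*H-1)) * (y ^ (2*H-2) * Real.exp (-2:ℝ) ^ (2*H-2)) := by
          apply mul_le_mul_of_nonneg_left _ hc
          rw [← step2]; exact step1
      _ ≤ (H ^ (2*H-1) * (2*H-1)) * (y ^ (2*H-2) * Real.exp 2) := by
          apply mul_le_mul_of_nonneg_left _ hc
          exact mul_le_mul_of_nonneg_left step3 hynn
      _ = (H ^ (2*H-1) * (2*H-1)) * Real.exp 2 * H ^ (2-2*H) * (w-z) ^ (2*H-2) := by
          rw [step4]; ring

end Aux

section Aux2

lemma absRpowInt01 {p : ℝ} (hp : -1 < p) :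
    IntervalIntegrable (fun t : ℝ => |t| ^ p) volume 0 1 := by
  have h := intervalIntegral.intervalIntegrable_rpow' hp (a := 0) (b := 1)
  rw [intervalIntegrable_iff_integrableOn_Ioc_of_le zero_le_one] at h ⊢
  refine h.congr_fun (fun t ht => ?_) measurableSet_Ioc
  rw [abs_of_nonneg ht.1.le]

lemma absRpowInt {p : ℝ} (hp : -1 < p) :
    IntervalIntegrable (fun t : ℝ => |t| ^ p) volume (-1) 1 := by
  have h01 := absRpowInt01 hp
  have hneg := (h01.comp_sub_left 0)
  simp only [zero_sub, abs_neg, neg_zero] at hneg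
  exact (hneg.symm).trans h01

lemma absRpowIntx {p : ℝ} (hp : -1 < p) (x : ℝ) :
    IntervalIntegrable (fun v : ℝ => |x - v| ^ p) volume (x-1) (x+1) := by
  have h := (absRpowInt hp).comp_sub_left x
  simp only [sub_neg_eq_add] at h
  exact h.symm

lemma absRpowVal01 {p : ℝ} (hp : -1 < p) :
    ∫ t in (0:ℝ)..1, |t| ^ p = 1 / (p + 1) := by
  rw [intervalIntegral.integral_congr (g := fun t : ℝ => t ^ p)
    (fun t ht => by rw [Set.uIcc_of_le zero_le_one] at ht; simp [abs_of_nonneg ht.1]),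
    integral_rpow (Or.inl hp)]
  rw [Real.one_rpow, Real.zero_rpow (by linarith)]
  norm_num

lemma absRpowVal {p : ℝ} (hp : -1 < p) :
    ∫ t in (-1:ℝ)..1, |t| ^ p = 2 / (p + 1) := by
  have h01 := absRpowInt01 hp
  have hneg : IntervalIntegrable (fun t : ℝ => |t| ^ p) volume (-1) 0 := by
    have hneg := (h01.comp_sub_left 0)
    simp only [zero_sub, abs_neg, neg_zero] at hneg
    exact hneg.symm
  rw [← intervalIntegral.integral_add_adjacent_intervals hneg h01]
  have hL : ∫ t in (-1:ℝ)..0, |t| ^ p = 1 / (p + 1) := by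
    have := intervalIntegral.integral_comp_neg (a := (0:ℝ)) (b := 1) (fun t : ℝ => |t| ^ p)
    simp only [abs_neg, neg_zero] at this
    rw [← this, absRpowVal01 hp]
  rw [hL, absRpowVal01 hp]
  ring

end Aux2

lemma gbound {H α : ℝ} (hH : H ∈ Set.Ioo (1/2:ℝ) 1) (hα : 0 < α) {T : ℝ} (hT : 1 ≤ T) (x : ℝ) :
    ∫ v in (0:ℝ)..T, Real.exp (α * v) * rker H x v
      ≤ (H^(2*H-1)*(2*H-1) * (1 - Real.exp (-(1/H)))^(2*H-2) / α
         + H^(2*H-1)*(2*H-1) * Real.exp 2 * H^(2-2*H) * Real.exp α * (2/(2*H-1)))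
        * Real.exp (α * T) := by
  obtain ⟨h1, h2⟩ := id hH
  have hH0 : (0:ℝ) < H := by linarith
  have hp : (-1:ℝ) < 2*H-2 := by linarith
  have hp0 : 2*H-2 ≤ 0 := by linarith
  have hc : (0:ℝ) ≤ H^(2*H-1)*(2*H-1) := by
    have := (Real.rpow_pos_of_pos hH0 (2*H-1)).le; nlinarith
  set C1 : ℝ := H^(2*H-1)*(2*H-1) * Real.exp 2 * H^(2-2*H) with hC1def
  set C2 : ℝ := H^(2*H-1)*(2*H-1) * (1 - Real.exp (-(1/H)))^(2*H-2) with hC2def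
  have hC1 : 0 ≤ C1 := by
    rw [hC1def]
    exact mul_nonneg (mul_nonneg hc (Real.exp_pos _).le) (Real.rpow_nonneg hH0.le _)
  have hC2 : 0 ≤ C2 := by
    rw [hC2def]
    exact mul_nonneg hc (Real.rpow_nonneg (by
      have : Real.exp (-(1/H)) < 1 := Real.exp_lt_one_iff.mpr (neg_lt_zero.mpr (by positivity))
      linarith) _)
  have h0T : (0:ℝ) ≤ T := by linarith
  rw [intervalIntegral.integral_of_le h0T]
  set ind : ℝ → ℝ := (Set.Icc (x-1) (x+1)).indicator (fun v => |x - v| ^ (2*H-2)) with hind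
  set D : ℝ → ℝ := fun v => C2 * Real.exp (α*v) + (C1 * Real.exp (α*(T+1))) * ind v with hD
  have hIcc : IntegrableOn (fun v : ℝ => |x - v| ^ (2*H-2)) (Set.Icc (x-1) (x+1)) volume := by
    rw [← intervalIntegrable_iff_integrableOn_Icc_of_le (by linarith : x-1 ≤ x+1)]
    exact absRpowIntx hp x
  have hInd : Integrable ind volume := (integrable_indicator_iff measurableSet_Icc).2 hIcc
  have hA : IntegrableOn (fun v : ℝ => C2 * Real.exp (α*v)) (Set.Ioc 0 T) volume := by
    have : Continuous fun v : ℝ => C2 * Real.exp (α*v) := by continuity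
    exact this.integrableOn_Ioc
  have hB : IntegrableOn (fun v : ℝ => (C1 * Real.exp (α*(T+1))) * ind v)
      (Set.Ioc 0 T) volume := (hInd.const_mul _).integrableOn
  have hDint : IntegrableOn D (Set.Ioc 0 T) volume := hA.add hB
  have hindnn : ∀ v, 0 ≤ ind v :=
    fun v => Set.indicator_nonneg (fun w _ => Real.rpow_nonneg (abs_nonneg _) _) v
  have hpt : ∀ v ∈ Set.Ioc (0:ℝ) T, Real.exp (α*v) * rker H x v ≤ D v := by
    intro v hv
    rcases le_or_gt |x - v| 1 with hcase | hcase
    · have hmem : v ∈ Set.Icc (x-1) (x+1) := by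
        rcases abs_le.mp hcase with ⟨hl, hr⟩
        constructor <;> linarith
      have hrk : rker H x v ≤ C1 * |x - v| ^ (2*H-2) := by
        rcases le_total v x with hvx | hvx
        · have h := rker_near hH hvx (by rw [abs_of_nonneg (by linarith : (0:ℝ) ≤ x - v)] at hcase; linarith)
          rw [abs_of_nonneg (by linarith : (0:ℝ) ≤ x - v)]
          exact h.trans_eq (by rw [hC1def]; try ring)
        · rw [rker_symm' x v]
          have h := rker_near hH hvx (by rw [abs_sub_comm, abs_of_nonneg (by linarith : (0:ℝ) ≤ v - x)] at hcase; linarith)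
          rw [abs_sub_comm, abs_of_nonneg (by linarith : (0:ℝ) ≤ v - x)]
          exact h.trans_eq (by rw [hC1def]; try ring)
      have hev : Real.exp (α*v) ≤ Real.exp (α*(T+1)) := by
        apply Real.exp_le_exp.mpr
        have := hv.2
        nlinarith
      have key : Real.exp (α*v) * rker H x v ≤ Real.exp (α*(T+1)) * (C1 * |x-v|^(2*H-2)) :=
        mul_le_mul hev hrk (rker_nonneg hH x v) (Real.exp_pos _).le
      have h0 : 0 ≤ C2 * Real.exp (α*v) := mul_nonneg hC2 (Real.exp_pos _).le
      have heq : Real.exp (α*(T+1)) * (C1 * |x-v|^(2*H-2))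
          = (C1 * Real.exp (α*(T+1))) * ind v := by
        simp only [hind, Set.indicator_of_mem hmem]; ring
      rw [hD]; dsimp only
      linarith [key, heq ▸ key]
    · have hrk : rker H x v ≤ C2 := by
        rcases le_total v x with hvx | hvx
        · have h := rker_far hH hvx (by rw [abs_of_nonneg (by linarith : (0:ℝ) ≤ x - v)] at hcase; linarith)
          exact h.trans_eq (by rw [hC2def])
        · rw [rker_symm' x v]
          have h := rker_far hH hvx (by rw [abs_sub_comm, abs_of_nonneg (by linarith : (0:ℝ) ≤ v - x)] at hcase; linarith)
          exact h.trans_eq (by rw [hC2def])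
      have key : Real.exp (α*v) * rker H x v ≤ Real.exp (α*v) * C2 :=
        mul_le_mul_of_nonneg_left hrk (Real.exp_pos _).le
      have h0 : 0 ≤ (C1 * Real.exp (α*(T+1))) * ind v :=
        mul_nonneg (mul_nonneg hC1 (Real.exp_pos _).le) (hindnn v)
      rw [hD]; dsimp only
      nlinarith
  have step : ∫ v in Set.Ioc (0:ℝ) T, Real.exp (α*v) * rker H x v
      ≤ ∫ v in Set.Ioc (0:ℝ) T, D v := by
    apply integral_mono_of_nonneg
    · exact Filter.Eventually.of_forall fun v => mul_nonneg (Real.exp_pos _).le (rker_nonneg hH x v)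
    · exact hDint
    · exact (ae_restrict_mem measurableSet_Ioc).mono fun v hv => hpt v hv
  refine step.trans ?_
  have hsplit : ∫ v in Set.Ioc (0:ℝ) T, D v
      = C2 * (∫ v in Set.Ioc (0:ℝ) T, Real.exp (α*v))
        + (C1 * Real.exp (α*(T+1))) * (∫ v in Set.Ioc (0:ℝ) T, ind v) := by
    rw [hD]
    rw [integral_add hA hB, integral_const_mul, integral_const_mul]
  have hexpint : ∫ v in Set.Ioc (0:ℝ) T, Real.exp (α*v) = (Real.exp (α*T) - 1)/α := by
    rw [← intervalIntegral.integral_of_le h0T]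
    rw [intervalIntegral.integral_comp_mul_left (fun u : ℝ => Real.exp u) hα.ne']
    simp [smul_eq_mul, Real.exp_zero]
    ring
  have hindint : ∫ v in Set.Ioc (0:ℝ) T, ind v ≤ 2/(2*H-1) := by
    rw [hind, setIntegral_indicator measurableSet_Icc]
    have hmono : ∫ v in Set.Ioc (0:ℝ) T ∩ Set.Icc (x-1) (x+1), |x - v| ^ (2*H-2)
        ≤ ∫ v in Set.Icc (x-1) (x+1), |x - v| ^ (2*H-2) := by
      apply setIntegral_mono_set hIcc
      · exact Filter.Eventually.of_forall fun v => Real.rpow_nonneg (abs_nonneg _) _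
      · exact HasSubset.Subset.eventuallyLE Set.inter_subset_right
    refine hmono.trans ?_
    rw [integral_Icc_eq_integral_Ioc, ← intervalIntegral.integral_of_le (by linarith : x-1 ≤ x+1)]
    have hcomp := intervalIntegral.integral_comp_sub_left (a := x-1) (b := x+1)
      (fun t : ℝ => |t|^(2*H-2)) x
    rw [show x - (x+1) = -1 by ring, show x - (x-1) = 1 by ring] at hcomp
    rw [hcomp, absRpowVal hp]
    rw [show 2*H-2+1 = 2*H-1 by ring]
  rw [hsplit, hexpint]
  have e1 : C2 * ((Real.exp (α*T) - 1)/α) ≤ C2/α * Real.exp (α*T) := by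
    have heq2 : C2/α * Real.exp (α*T) - C2 * ((Real.exp (α*T) - 1)/α) = C2/α := by
      field_simp
      ring
    have h3 : 0 ≤ C2/α := div_nonneg hC2 hα.le
    linarith
  have e2 : C1 * Real.exp (α*(T+1)) * (∫ v in Set.Ioc (0:ℝ) T, ind v)
      ≤ C1 * Real.exp α * (2/(2*H-1)) * Real.exp (α*T) := by
    have h4 : C1 * Real.exp (α*(T+1)) * (∫ v in Set.Ioc (0:ℝ) T, ind v)
        ≤ C1 * Real.exp (α*(T+1)) * (2/(2*H-1)) :=
      mul_le_mul_of_nonneg_left hindint (mul_nonneg hC1 (Real.exp_pos _).le)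
    refine h4.trans_eq ?_
    rw [show α*(T+1) = α + α*T by ring, Real.exp_add]; ring
  calc C2 * ((Real.exp (α*T) - 1)/α) + C1 * Real.exp (α*(T+1)) * (∫ v in Set.Ioc (0:ℝ) T, ind v)
      ≤ C2/α * Real.exp (α*T) + (C1 * Real.exp α * (2/(2*H-1)) * Real.exp (α*T)) :=
        add_le_add e1 e2
    _ = (C2/α + C1 * Real.exp α * (2/(2*H-1))) * Real.exp (α*T) := by ring

theorem stmt16 (H α τ : ℝ) (hH : H ∈ Set.Ioo (1/2 : ℝ) 1) (hα : 0 < α) (hτ : 0 < τ) :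
    ∃ C : ℝ, 0 < C ∧ ∀ T : ℝ, 1 ≤ T →
      (∫ u₁ in (0:ℝ)..T, ∫ u₂ in (0:ℝ)..T, ∫ v₁ in (0:ℝ)..T, ∫ v₂ in (0:ℝ)..T,
          lker α τ T u₁ u₂ * lker α τ T v₁ v₂ * rker H u₁ v₁ * rker H u₂ v₂)
        ≤ C / T ^ 2 := by
  obtain ⟨h1, h2⟩ := id hH
  have hH0 : (0:ℝ) < H := by linarith
  set M : ℝ := H^(2*H-1)*(2*H-1) * (1 - Real.exp (-(1/H)))^(2*H-2) / α
         + H^(2*H-1)*(2*H-1) * Real.exp 2 * H^(2-2*H) * Real.exp α * (2/(2*H-1)) with hM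
  have hc : (0:ℝ) < H^(2*H-1)*(2*H-1) := by
    have := Real.rpow_pos_of_pos hH0 (2*H-1); nlinarith
  have hbase : (0:ℝ) < 1 - Real.exp (-(1/H)) := by
    have : Real.exp (-(1/H)) < 1 := Real.exp_lt_one_iff.mpr (neg_lt_zero.mpr (by positivity))
    linarith
  have hM0 : 0 < M := by
    rw [hM]
    have t1 : 0 < H^(2*H-1)*(2*H-1) * (1 - Real.exp (-(1/H)))^(2*H-2) / α :=
      div_pos (mul_pos hc (Real.rpow_pos_of_pos hbase _)) hα
    have t2 : (0:ℝ) ≤ H^(2*H-1)*(2*H-1) * Real.exp 2 * H^(2-2*H) * Real.exp α * (2/(2*H-1)) := by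
      have hq : (0:ℝ) ≤ H^(2-2*H) := (Real.rpow_pos_of_pos hH0 _).le
      have h3 : (0:ℝ) ≤ 2/(2*H-1) := div_nonneg (by norm_num) (by linarith)
      exact mul_nonneg (mul_nonneg (mul_nonneg (mul_nonneg hc.le (Real.exp_pos _).le) hq)
        (Real.exp_pos _).le) h3
    linarith
  refine ⟨(M/(2*α^2*τ))^2, by positivity, ?_⟩
  intro T hT
  have h0T : (0:ℝ) ≤ T := by linarith
  have hT0 : (0:ℝ) < T := by linarith
  have huIcc : Set.uIcc (0:ℝ) T = Set.Icc (0:ℝ) T := Set.uIcc_of_le h0T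
  set c₀ : ℝ := 1/(2*α*τ*T) * Real.exp (-2*α*T) with hc0
  set g : ℝ → ℝ := fun x => ∫ v in (0:ℝ)..T, Real.exp (α*v) * rker H x v with hg
  set J : ℝ := ∫ x in (0:ℝ)..T, Real.exp (α*x) * g x with hJdef
  have hg0 : ∀ x, 0 ≤ g x := fun x =>
    intervalIntegral.integral_nonneg h0T fun v _ =>
      mul_nonneg (Real.exp_pos _).le (rker_nonneg hH x v)
  have hgle : ∀ x : ℝ, g x ≤ M * Real.exp (α*T) := by
    intro x
    have h := gbound hH hα hT x
    rw [← hM] at h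
    exact h
  have hJ0 : 0 ≤ J :=
    intervalIntegral.integral_nonneg h0T fun x _ =>
      mul_nonneg (Real.exp_pos _).le (hg0 x)
  -- bound on J
  set X : ℝ := M/α * Real.exp (α*T) * Real.exp (α*T) with hX
  have hXnn : 0 ≤ X := by
    rw [hX]; positivity
  have hJle : J ≤ X := by
    have hmono : J ≤ ∫ x in Set.Ioc (0:ℝ) T, Real.exp (α*x) * (M * Real.exp (α*T)) := by
      rw [hJdef, intervalIntegral.integral_of_le h0T]
      apply integral_mono_of_nonneg
      · exact Filter.Eventually.of_forall fun x => mul_nonneg (Real.exp_pos _).le (hg0 x)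
      · have : Continuous fun x : ℝ => Real.exp (α*x) * (M * Real.exp (α*T)) := by continuity
        exact this.integrableOn_Ioc
      · exact Filter.Eventually.of_forall fun x =>
          mul_le_mul_of_nonneg_left (hgle x) (Real.exp_pos _).le
    have hval : ∫ x in Set.Ioc (0:ℝ) T, Real.exp (α*x) * (M * Real.exp (α*T))
        = (M * Real.exp (α*T)) * ((Real.exp (α*T) - 1)/α) := by
      rw [← intervalIntegral.integral_of_le h0T, intervalIntegral.integral_mul_const]
      rw [intervalIntegral.integral_comp_mul_left (fun u : ℝ => Real.exp u) hα.ne']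
      simp [smul_eq_mul, Real.exp_zero]
      ring
    have hle2 : (M * Real.exp (α*T)) * ((Real.exp (α*T) - 1)/α) ≤ X := by
      rw [hX]
      have hMe : 0 ≤ M * Real.exp (α*T) := mul_nonneg hM0.le (Real.exp_pos _).le
      have h5 : (Real.exp (α*T) - 1)/α ≤ Real.exp (α*T)/α := by
        gcongr
        linarith
      calc (M * Real.exp (α*T)) * ((Real.exp (α*T) - 1)/α)
          ≤ (M * Real.exp (α*T)) * (Real.exp (α*T)/α) :=
            mul_le_mul_of_nonneg_left h5 hMe
        _ = M/α * Real.exp (α*T) * Real.exp (α*T) := by ring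
    calc J ≤ _ := hmono
      _ = _ := hval
      _ ≤ X := hle2
  -- the quadruple integral equals (c₀^2 * J) * J
  have lev1 : ∀ u₁ ∈ Set.Icc (0:ℝ) T, ∀ u₂ ∈ Set.Icc (0:ℝ) T, ∀ v₁ ∈ Set.Icc (0:ℝ) T,
      (∫ v₂ in (0:ℝ)..T, lker α τ T u₁ u₂ * lker α τ T v₁ v₂ * rker H u₁ v₁ * rker H u₂ v₂)
      = (c₀ * c₀ * Real.exp (α*u₁) * Real.exp (α*u₂) * Real.exp (α*v₁) * rker H u₁ v₁) * g u₂ := by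
    intro u₁ hu₁ u₂ hu₂ v₁ hv₁
    calc (∫ v₂ in (0:ℝ)..T, lker α τ T u₁ u₂ * lker α τ T v₁ v₂ * rker H u₁ v₁ * rker H u₂ v₂)
        = ∫ v₂ in (0:ℝ)..T,
            (c₀ * c₀ * Real.exp (α*u₁) * Real.exp (α*u₂) * Real.exp (α*v₁) * rker H u₁ v₁) *
              (Real.exp (α*v₂) * rker H u₂ v₂) := by
          apply intervalIntegral.integral_congr
          intro v₂ hv₂
          rw [huIcc] at hv₂
          dsimp only
          have hm1 : ((u₁, u₂) : ℝ × ℝ) ∈ Set.Icc (0:ℝ) T ×ˢ Set.Icc (0:ℝ) T :=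
            Set.mem_prod.mpr ⟨hu₁, hu₂⟩
          have hm2 : ((v₁, v₂) : ℝ × ℝ) ∈ Set.Icc (0:ℝ) T ×ˢ Set.Icc (0:ℝ) T :=
            Set.mem_prod.mpr ⟨hv₁, hv₂⟩
          have e1 : lker α τ T u₁ u₂ = c₀ * Real.exp (α*u₁) * Real.exp (α*u₂) := by
            simp only [lker, Set.indicator_of_mem hm1, hc0]
          have e2 : lker α τ T v₁ v₂ = c₀ * Real.exp (α*v₁) * Real.exp (α*v₂) := by
            simp only [lker, Set.indicator_of_mem hm2, hc0]
          rw [e1, e2]; ring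
      _ = _ := by rw [intervalIntegral.integral_const_mul]
  have lev2 : ∀ u₁ ∈ Set.Icc (0:ℝ) T, ∀ u₂ ∈ Set.Icc (0:ℝ) T,
      (∫ v₁ in (0:ℝ)..T, ∫ v₂ in (0:ℝ)..T,
          lker α τ T u₁ u₂ * lker α τ T v₁ v₂ * rker H u₁ v₁ * rker H u₂ v₂)
      = (c₀ * c₀ * Real.exp (α*u₁) * Real.exp (α*u₂) * g u₂) * g u₁ := by
    intro u₁ hu₁ u₂ hu₂
    calc (∫ v₁ in (0:ℝ)..T, ∫ v₂ in (0:ℝ)..T,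
          lker α τ T u₁ u₂ * lker α τ T v₁ v₂ * rker H u₁ v₁ * rker H u₂ v₂)
        = ∫ v₁ in (0:ℝ)..T,
            (c₀ * c₀ * Real.exp (α*u₁) * Real.exp (α*u₂) * g u₂) *
              (Real.exp (α*v₁) * rker H u₁ v₁) := by
          apply intervalIntegral.integral_congr
          intro v₁ hv₁
          rw [huIcc] at hv₁
          dsimp only
          rw [lev1 u₁ hu₁ u₂ hu₂ v₁ hv₁]; ring
      _ = _ := by rw [intervalIntegral.integral_const_mul]
  have lev3 : ∀ u₁ ∈ Set.Icc (0:ℝ) T,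
      (∫ u₂ in (0:ℝ)..T, ∫ v₁ in (0:ℝ)..T, ∫ v₂ in (0:ℝ)..T,
          lker α τ T u₁ u₂ * lker α τ T v₁ v₂ * rker H u₁ v₁ * rker H u₂ v₂)
      = (c₀ * c₀ * Real.exp (α*u₁) * g u₁) * J := by
    intro u₁ hu₁
    calc (∫ u₂ in (0:ℝ)..T, ∫ v₁ in (0:ℝ)..T, ∫ v₂ in (0:ℝ)..T,
          lker α τ T u₁ u₂ * lker α τ T v₁ v₂ * rker H u₁ v₁ * rker H u₂ v₂)
        = ∫ u₂ in (0:ℝ)..T,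
            (c₀ * c₀ * Real.exp (α*u₁) * g u₁) * (Real.exp (α*u₂) * g u₂) := by
          apply intervalIntegral.integral_congr
          intro u₂ hu₂
          rw [huIcc] at hu₂
          dsimp only
          rw [lev2 u₁ hu₁ u₂ hu₂]; ring
      _ = _ := by rw [intervalIntegral.integral_const_mul]
  have hquad : (∫ u₁ in (0:ℝ)..T, ∫ u₂ in (0:ℝ)..T, ∫ v₁ in (0:ℝ)..T, ∫ v₂ in (0:ℝ)..T,
          lker α τ T u₁ u₂ * lker α τ T v₁ v₂ * rker H u₁ v₁ * rker H u₂ v₂)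
      = (c₀ * c₀ * J) * J := by
    calc (∫ u₁ in (0:ℝ)..T, ∫ u₂ in (0:ℝ)..T, ∫ v₁ in (0:ℝ)..T, ∫ v₂ in (0:ℝ)..T,
          lker α τ T u₁ u₂ * lker α τ T v₁ v₂ * rker H u₁ v₁ * rker H u₂ v₂)
        = ∫ u₁ in (0:ℝ)..T, (c₀ * c₀ * J) * (Real.exp (α*u₁) * g u₁) := by
          apply intervalIntegral.integral_congr
          intro u₁ hu₁
          rw [huIcc] at hu₁
          dsimp only
          rw [lev3 u₁ hu₁]; ring
      _ = _ := by rw [intervalIntegral.integral_const_mul]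
  rw [hquad]
  -- final bound
  have hc00 : 0 < c₀ := by rw [hc0]; positivity
  have hJJ : J * J ≤ X * X := mul_le_mul hJle hJle hJ0 hXnn
  have hfin : (c₀ * c₀ * J) * J ≤ (c₀ * X) * (c₀ * X) := by nlinarith [sq_nonneg c₀]
  have hexp1 : Real.exp (-2*α*T) * Real.exp (α*T) * Real.exp (α*T) = 1 := by
    rw [← Real.exp_add, ← Real.exp_add, show -2*α*T + α*T + α*T = 0 by ring, Real.exp_zero]
  have hCX : c₀ * X = M/(2*α^2*τ) * (1/T) := by
    rw [hc0, hX]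
    calc 1/(2*α*τ*T) * Real.exp (-2*α*T) * (M/α * Real.exp (α*T) * Real.exp (α*T))
        = M/(2*α^2*τ) * (1/T) * (Real.exp (-2*α*T) * Real.exp (α*T) * Real.exp (α*T)) := by
          ring
      _ = M/(2*α^2*τ) * (1/T) := by rw [hexp1, mul_one]
  refine hfin.trans ?_
  rw [hCX]
  rw [show M/(2*α^2*τ) * (1/T) * (M/(2*α^2*τ) * (1/T)) = (M/(2*α^2*τ))^2 / T^2 by ring]
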